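/- The function Ai is entire (complex differentiable on all of ℂ) and satisfies the Airy differential equation Ai″(z) = z·Ai(z) for every z ∈ ℂ; likewise Bi is entire and satisfies Bi″(z) = z·Bi(z) for every z ∈ ℂ. -/

import Mathlib

open Complex

/-- The Airy function `Ai`, defined by its power series. -/
noncomputable def Ai (z : ℂ) : ℂ :=
  (3 : ℂ) ^ (-(2 : ℂ) / 3) *
      ∑' n : ℕ, z ^ (3 * n) / ((9 : ℂ) ^ n * (Nat.factorial n : ℂ) * Complex.Gamma ((n : ℂ) + 2 / 3)) -
    (3 : ℂ) ^ (-(4 : ℂ) / 3) *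
      ∑' n : ℕ, z ^ (3 * n + 1) / ((9 : ℂ) ^ n * (Nat.factorial n : ℂ) * Complex.Gamma ((n : ℂ) + 4 / 3))

/-- The Airy function `Bi`, defined by its power series. -/
noncomputable def Bi (z : ℂ) : ℂ :=
  (3 : ℂ) ^ (-(1 : ℂ) / 6) *
      ∑' n : ℕ, z ^ (3 * n) / ((9 : ℂ) ^ n * (Nat.factorial n : ℂ) * Complex.Gamma ((n : ℂ) + 2 / 3)) +
    (3 : ℂ) ^ (-(5 : ℂ) / 6) *
      ∑' n : ℕ, z ^ (3 * n + 1) / ((9 : ℂ) ^ n * (Nat.factorial n : ℂ) * Complex.Gamma ((n : ℂ) + 4 / 3))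

noncomputable def Dd (c : ℝ) (n : ℕ) : ℂ :=
  (9 : ℂ) ^ n * (Nat.factorial n : ℂ) * Complex.Gamma ((n : ℂ) + c)

lemma gamma_lb (c : ℝ) (hc : (1:ℝ)/3 ≤ c) (n : ℕ) :
    (1/3 : ℝ)^n * n.factorial * Real.Gamma c ≤ Real.Gamma (n + c) := by
  have hc0 : (0:ℝ) < c := lt_of_lt_of_le (by norm_num) hc
  induction n with
  | zero => simp
  | succ n ih =>
    have hpos : (0:ℝ) < (n:ℝ) + c := by positivity
    have h1 : Real.Gamma ((n+1 : ℕ) + c) = ((n:ℝ)+c) * Real.Gamma (n + c) := by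
      push_cast
      rw [show (n:ℝ) + 1 + c = ((n:ℝ)+c) + 1 by ring, Real.Gamma_add_one hpos.ne']
    rw [h1]
    have h2 : (1/3:ℝ) * (n+1) ≤ (n:ℝ) + c := by
      have : (0:ℝ) ≤ n := n.cast_nonneg
      nlinarith
    calc (1/3 : ℝ)^(n+1) * (n+1).factorial * Real.Gamma c
        = ((1/3:ℝ) * (n+1)) * ((1/3:ℝ)^n * n.factorial * Real.Gamma c) := by
          rw [Nat.factorial_succ]; push_cast; ring
      _ ≤ ((n:ℝ)+c) * ((1/3:ℝ)^n * n.factorial * Real.Gamma c) := by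
          apply mul_le_mul_of_nonneg_right h2
          have := Real.Gamma_pos_of_pos hc0
          positivity
      _ ≤ ((n:ℝ)+c) * Real.Gamma (n + c) := by
          exact mul_le_mul_of_nonneg_left ih hpos.le

lemma normDd (c : ℝ) (hc : (1:ℝ)/3 ≤ c) (n : ℕ) :
    ‖Dd c n‖ = 9^n * n.factorial * Real.Gamma ((n:ℝ) + c) := by
  have hc0 : (0:ℝ) < c := lt_of_lt_of_le (by norm_num) hc
  have h1 : ((n : ℂ) + c) = (((n:ℝ) + c : ℝ) : ℂ) := by push_cast; ring
  have h2 : Complex.Gamma ((n : ℂ) + c) = ((Real.Gamma ((n:ℝ)+c) : ℝ) : ℂ) := by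
    rw [h1, Complex.Gamma_ofReal]
  rw [Dd, h2]
  have hg : (0:ℝ) < Real.Gamma ((n:ℝ)+c) := Real.Gamma_pos_of_pos (by positivity)
  rw [norm_mul, norm_mul, norm_pow]
  simp [abs_of_pos hg, Nat.abs_cast]

lemma Dd_norm_ge (c : ℝ) (hc : (1:ℝ)/3 ≤ c) (n : ℕ) :
    Real.Gamma c * 3^n * n.factorial ≤ ‖Dd c n‖ := by
  have hc0 : (0:ℝ) < c := lt_of_lt_of_le (by norm_num) hc
  rw [normDd c hc]
  have h := gamma_lb c hc n
  have hfac : (1:ℝ) ≤ n.factorial := by exact_mod_cast n.factorial_pos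
  calc Real.Gamma c * 3^n * n.factorial
      = 9^n * ((1/3:ℝ)^n * 1 * Real.Gamma c) * n.factorial := by
        have : (9:ℝ)^n * (1/3:ℝ)^n = 3^n := by
          rw [← mul_pow]; norm_num
        calc Real.Gamma c * 3^n * n.factorial
            = (9^n * (1/3:ℝ)^n) * Real.Gamma c * n.factorial := by rw [this]; ring
          _ = 9^n * ((1/3:ℝ)^n * 1 * Real.Gamma c) * n.factorial := by ring
    _ ≤ 9^n * ((1/3:ℝ)^n * n.factorial * Real.Gamma c) * n.factorial := by
        have hg := (Real.Gamma_pos_of_pos hc0).le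
        gcongr
    _ ≤ 9^n * Real.Gamma ((n:ℝ)+c) * n.factorial := by gcongr
    _ = 9^n * n.factorial * Real.Gamma ((n:ℝ)+c) := by ring

lemma sq_le_pow16 (n : ℕ) : ((3*n+1 : ℝ))^2 ≤ 16^n := by
  induction n with
  | zero => norm_num
  | succ n ih =>
    push_cast
    have h : ((3*((n:ℝ)+1)+1 : ℝ))^2 ≤ 16 * ((3*n+1:ℝ))^2 := by
      have : (0:ℝ) ≤ n := n.cast_nonneg
      nlinarith
    calc ((3*((n:ℝ)+1)+1 : ℝ))^2 ≤ 16 * ((3*n+1:ℝ))^2 := h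
      _ ≤ 16 * 16^n := by nlinarith
      _ = 16^(n+1) := by ring

noncomputable def uB (c S : ℝ) (n : ℕ) : ℝ :=
  (Real.Gamma c)⁻¹ * S * ((16*S^3/3)^n / n.factorial)

lemma summable_uB (c S : ℝ) : Summable (uB c S) :=
  (Real.summable_pow_div_factorial (16*S^3/3)).mul_left _

lemma core_bound (c : ℝ) (hc : (1:ℝ)/3 ≤ c) (S : ℝ) (hS : 1 ≤ S) (n : ℕ)
    (x : ℝ) (hx : 0 ≤ x) (hx' : x ≤ (3*n+1)^2 * S^(3*n+1)) :
    x / ‖Dd c n‖ ≤ uB c S n := by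
  have hc0 : (0:ℝ) < c := lt_of_lt_of_le (by norm_num) hc
  have hg : (0:ℝ) < Real.Gamma c := Real.Gamma_pos_of_pos hc0
  have hD : Real.Gamma c * 3^n * n.factorial ≤ ‖Dd c n‖ := Dd_norm_ge c hc n
  have hDpos : (0:ℝ) < Real.Gamma c * 3^n * n.factorial := by positivity
  calc x / ‖Dd c n‖ ≤ x / (Real.Gamma c * 3^n * n.factorial) := by
        exact div_le_div_of_nonneg_left hx hDpos hD
    _ ≤ ((3*n+1)^2 * S^(3*n+1)) / (Real.Gamma c * 3^n * n.factorial) := by gcongr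
    _ ≤ (16^n * (S * (S^3)^n)) / (Real.Gamma c * 3^n * n.factorial) := by
        gcongr
        · exact sq_le_pow16 n
        · calc S^(3*n+1) = S * (S^3)^n := by rw [← pow_mul]; ring
            _ ≤ S * (S^3)^n := le_refl _
    _ = uB c S n := by
        rw [uB, div_pow, ← pow_mul]
        field_simp
        ring

lemma one_le_sq (n : ℕ) : (1:ℝ) ≤ ((3*(n:ℝ)+1))^2 := by
  have : (0:ℝ) ≤ n := n.cast_nonneg
  nlinarith

lemma bound0 (c : ℝ) (hc : (1:ℝ)/3 ≤ c) (S : ℝ) (hS : 1 ≤ S) (j n : ℕ) (hj : j ≤ 1)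
    (z : ℂ) (hz : ‖z‖ ≤ S) : ‖z^(3*n+j) / Dd c n‖ ≤ uB c S n := by
  rw [norm_div, norm_pow]
  apply core_bound c hc S hS n _ (by positivity)
  have hX : (0:ℝ) ≤ S^(3*n+1) := by positivity
  calc ‖z‖^(3*n+j) ≤ S^(3*n+j) := pow_le_pow_left₀ (norm_nonneg z) hz _
    _ ≤ S^(3*n+1) := pow_le_pow_right₀ hS (by omega)
    _ ≤ (3*n+1)^2 * S^(3*n+1) := by nlinarith [one_le_sq n]

lemma bound1 (c : ℝ) (hc : (1:ℝ)/3 ≤ c) (S : ℝ) (hS : 1 ≤ S) (j n : ℕ) (hj : j ≤ 1)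
    (z : ℂ) (hz : ‖z‖ ≤ S) :
    ‖(((3*n+j : ℕ):ℂ) * z^(3*n+j-1)) / Dd c n‖ ≤ uB c S n := by
  rw [norm_div, norm_mul, norm_pow, Complex.norm_natCast]
  apply core_bound c hc S hS n _ (by positivity)
  have hS0 : (0:ℝ) < S := lt_of_lt_of_le one_pos hS
  have h1 : ‖z‖^(3*n+j-1) ≤ S^(3*n+1) :=
    (pow_le_pow_left₀ (norm_nonneg z) hz _).trans (pow_le_pow_right₀ hS (by omega))
  have h2 : ((3*n+j : ℕ):ℝ) ≤ 3*(n:ℝ)+1 := by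
    have : (j:ℝ) ≤ 1 := by exact_mod_cast hj
    push_cast; linarith
  have hn : (0:ℝ) ≤ ((3*n+j : ℕ):ℝ) := Nat.cast_nonneg _
  have hXpos : (0:ℝ) ≤ S^(3*n+1) := by positivity
  have hsq := one_le_sq n
  have hone : (3*(n:ℝ)+1) ≤ (3*(n:ℝ)+1)^2 := by nlinarith [(Nat.cast_nonneg n : (0:ℝ) ≤ n)]
  calc ((3*n+j : ℕ):ℝ) * ‖z‖^(3*n+j-1) ≤ (3*(n:ℝ)+1) * S^(3*n+1) := by
        exact mul_le_mul h2 h1 (by positivity) (by linarith [(Nat.cast_nonneg n : (0:ℝ) ≤ n)])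
    _ ≤ (3*(n:ℝ)+1)^2 * S^(3*n+1) := by gcongr

lemma bound2 (c : ℝ) (hc : (1:ℝ)/3 ≤ c) (S : ℝ) (hS : 1 ≤ S) (j n : ℕ) (hj : j ≤ 1)
    (z : ℂ) (hz : ‖z‖ ≤ S) :
    ‖(((3*n+j : ℕ):ℂ) * (((3*n+j-1 : ℕ):ℂ) * z^(3*n+j-1-1))) / Dd c n‖ ≤ uB c S n := by
  rw [norm_div, norm_mul, norm_mul, norm_pow, Complex.norm_natCast, Complex.norm_natCast]
  apply core_bound c hc S hS n _ (by positivity)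
  have hS0 : (0:ℝ) < S := lt_of_lt_of_le one_pos hS
  have h1 : ‖z‖^(3*n+j-1-1) ≤ S^(3*n+1) :=
    (pow_le_pow_left₀ (norm_nonneg z) hz _).trans (pow_le_pow_right₀ hS (by omega))
  have h2 : ((3*n+j : ℕ):ℝ) ≤ 3*(n:ℝ)+1 := by
    have : (j:ℝ) ≤ 1 := by exact_mod_cast hj
    push_cast; linarith
  have h3 : ((3*n+j-1 : ℕ):ℝ) ≤ 3*(n:ℝ)+1 := by
    have : ((3*n+j-1 : ℕ):ℝ) ≤ ((3*n+j : ℕ):ℝ) := by exact_mod_cast Nat.sub_le _ _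
    linarith
  have hn0 : (0:ℝ) ≤ 3*(n:ℝ)+1 := by positivity
  calc ((3*n+j : ℕ):ℝ) * (((3*n+j-1 : ℕ):ℝ) * ‖z‖^(3*n+j-1-1))
      ≤ (3*(n:ℝ)+1) * ((3*(n:ℝ)+1) * S^(3*n+1)) := by
        apply mul_le_mul h2 _ (by positivity) hn0
        exact mul_le_mul h3 h1 (by positivity) hn0
    _ = (3*(n:ℝ)+1)^2 * S^(3*n+1) := by ring

lemma Dd_ne_zero (c : ℝ) (hc : (1:ℝ)/3 ≤ c) (n : ℕ) : Dd c n ≠ 0 := by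
  have h := Dd_norm_ge c hc n
  have hc0 : (0:ℝ) < c := lt_of_lt_of_le (by norm_num) hc
  have hg : (0:ℝ) < Real.Gamma c := Real.Gamma_pos_of_pos hc0
  have hfac : (0:ℝ) < n.factorial := by exact_mod_cast n.factorial_pos
  have : (0:ℝ) < ‖Dd c n‖ := lt_of_lt_of_le (by positivity) h
  exact norm_pos_iff.mp this

lemma mem_ball_norm_le {z y : ℂ} (hy : y ∈ Metric.ball (0:ℂ) (‖z‖+1)) : ‖y‖ ≤ ‖z‖+1 := by
  rw [Metric.mem_ball, dist_zero_right] at hy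
  exact hy.le

lemma oneleS (z : ℂ) : (1:ℝ) ≤ ‖z‖ + 1 := by
  have := norm_nonneg z; linarith

lemma hasDerivAt_F (c : ℝ) (hc : (1:ℝ)/3 ≤ c) (j : ℕ) (hj : j ≤ 1) (z : ℂ) :
    HasDerivAt (fun w => ∑' n : ℕ, w^(3*n+j) / Dd c n)
      (∑' n : ℕ, (((3*n+j : ℕ):ℂ) * z^(3*n+j-1)) / Dd c n) z := by
  set S : ℝ := ‖z‖ + 1 with hSdef
  have hS : (1:ℝ) ≤ S := oneleS z
  have hS0 : (0:ℝ) < S := lt_of_lt_of_le one_pos hS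
  apply hasDerivAt_tsum_of_isPreconnected (summable_uB c S) Metric.isOpen_ball
    (convex_ball (0:ℂ) S).isPreconnected
    (fun n y _ => (hasDerivAt_pow (3*n+j) y).div_const (Dd c n))
    (fun n y hy => bound1 c hc S hS j n hj y (mem_ball_norm_le hy))
    (Metric.mem_ball_self hS0)
    (Summable.of_norm_bounded (summable_uB c S)
      (fun n => bound0 c hc S hS j n hj 0 (by simpa using hS0.le)))
    (by simp [Metric.mem_ball, hSdef])

lemma hasDerivAt_F1 (c : ℝ) (hc : (1:ℝ)/3 ≤ c) (j : ℕ) (hj : j ≤ 1) (z : ℂ) :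
    HasDerivAt (fun w => ∑' n : ℕ, (((3*n+j : ℕ):ℂ) * w^(3*n+j-1)) / Dd c n)
      (∑' n : ℕ, (((3*n+j : ℕ):ℂ) * (((3*n+j-1 : ℕ):ℂ) * z^(3*n+j-1-1))) / Dd c n) z := by
  set S : ℝ := ‖z‖ + 1 with hSdef
  have hS : (1:ℝ) ≤ S := oneleS z
  have hS0 : (0:ℝ) < S := lt_of_lt_of_le one_pos hS
  apply hasDerivAt_tsum_of_isPreconnected (summable_uB c S) Metric.isOpen_ball
    (convex_ball (0:ℂ) S).isPreconnected
    (fun n y _ => ((hasDerivAt_pow (3*n+j-1) y).const_mul (((3*n+j : ℕ):ℂ))).div_const (Dd c n))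
    (fun n y hy => bound2 c hc S hS j n hj y (mem_ball_norm_le hy))
    (Metric.mem_ball_self hS0)
    (Summable.of_norm_bounded (summable_uB c S)
      (fun n => bound1 c hc S hS j n hj 0 (by simpa using hS0.le)))
    (by simp [Metric.mem_ball, hSdef])

lemma summable_T2 (c : ℝ) (hc : (1:ℝ)/3 ≤ c) (j : ℕ) (hj : j ≤ 1) (z : ℂ) :
    Summable (fun n : ℕ => (((3*n+j : ℕ):ℂ) * (((3*n+j-1 : ℕ):ℂ) * z^(3*n+j-1-1))) / Dd c n) :=
  Summable.of_norm_bounded (summable_uB c (‖z‖+1))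
    (fun n => bound2 c hc (‖z‖+1) (oneleS z) j n hj z (by linarith [norm_nonneg z]))

lemma T2_sum_eq (c : ℝ) (hc : (1:ℝ)/3 ≤ c) (j : ℕ) (hj : j ≤ 1)
    (hrel : ∀ n : ℕ, ((3*n+3+j : ℕ) : ℂ) * ((3*n+2+j : ℕ) : ℂ) * Dd c n = Dd c (n+1)) (z : ℂ) :
    (∑' n : ℕ, (((3*n+j : ℕ):ℂ) * (((3*n+j-1 : ℕ):ℂ) * z^(3*n+j-1-1))) / Dd c n)
      = z * ∑' n : ℕ, z^(3*n+j) / Dd c n := by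
  rw [Summable.tsum_eq_zero_add (summable_T2 c hc j hj z)]
  have h0 : (((3*0+j : ℕ):ℂ) * (((3*0+j-1 : ℕ):ℂ) * z^(3*0+j-1-1))) / Dd c 0 = 0 := by
    have hj0 : 3*0+j-1 = 0 := by omega
    rw [hj0]
    simp
  rw [h0, zero_add]
  rw [← tsum_mul_left]
  congr 1
  funext n
  have e1 : 3*(n+1)+j = 3*n+3+j := by omega
  have e2 : 3*n+3+j-1 = 3*n+2+j := by omega
  have e3 : 3*n+2+j-1 = (3*n+j)+1 := by omega
  rw [e1, e2, e3, ← hrel n]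
  have hA : ((3*n+3+j : ℕ):ℂ) ≠ 0 := Nat.cast_ne_zero.mpr (by omega)
  have hB : ((3*n+2+j : ℕ):ℂ) ≠ 0 := Nat.cast_ne_zero.mpr (by omega)
  have hD : Dd c n ≠ 0 := Dd_ne_zero c hc n
  rw [show ((3*n+3+j : ℕ):ℂ) * (((3*n+2+j : ℕ):ℂ) * z^((3*n+j)+1))
      = (((3*n+3+j : ℕ):ℂ) * ((3*n+2+j : ℕ):ℂ)) * z^((3*n+j)+1) from by ring,
    mul_div_mul_left _ _ (mul_ne_zero hA hB), ← mul_div_assoc, pow_succ, mul_comm (z^(3*n+j)) z]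

lemma series_props (c : ℝ) (hc : (1:ℝ)/3 ≤ c) (j : ℕ) (hj : j ≤ 1)
    (hrel : ∀ n : ℕ, ((3*n+3+j : ℕ) : ℂ) * ((3*n+2+j : ℕ) : ℂ) * Dd c n = Dd c (n+1)) :
    Differentiable ℂ (fun w => ∑' n : ℕ, w^(3*n+j) / Dd c n) ∧
    deriv (fun w => ∑' n : ℕ, w^(3*n+j) / Dd c n)
      = (fun w => ∑' n : ℕ, (((3*n+j : ℕ):ℂ) * w^(3*n+j-1)) / Dd c n) ∧
    Differentiable ℂ (fun w => ∑' n : ℕ, (((3*n+j : ℕ):ℂ) * w^(3*n+j-1)) / Dd c n) ∧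
    ∀ z : ℂ, deriv (fun w => ∑' n : ℕ, (((3*n+j : ℕ):ℂ) * w^(3*n+j-1)) / Dd c n) z
      = z * ∑' n : ℕ, z^(3*n+j) / Dd c n := by
  refine ⟨fun z => (hasDerivAt_F c hc j hj z).differentiableAt, ?_, ?_, ?_⟩
  · funext z; exact (hasDerivAt_F c hc j hj z).deriv
  · exact fun z => (hasDerivAt_F1 c hc j hj z).differentiableAt
  · intro z
    rw [(hasDerivAt_F1 c hc j hj z).deriv]
    exact T2_sum_eq c hc j hj hrel z

lemma Dd_succ (c : ℝ) (hc : 0 < c) (n : ℕ) :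
    Dd c (n+1) = 9*((n:ℂ)+1)*((n:ℂ)+c) * Dd c n := by
  unfold Dd
  have harg : (((n+1 : ℕ)):ℂ) + (c:ℂ) = ((n:ℂ) + c) + 1 := by push_cast; ring
  have hne : ((n:ℂ) + (c:ℝ)) ≠ 0 := by
    intro h
    have hre := congrArg Complex.re h
    simp at hre
    have : (0:ℝ) ≤ (n:ℝ) := n.cast_nonneg
    linarith
  rw [harg, Complex.Gamma_add_one _ hne, Nat.factorial_succ]
  push_cast; ring

lemma hrelA : ∀ n : ℕ, ((3*n+3+0 : ℕ) : ℂ) * ((3*n+2+0 : ℕ) : ℂ) * Dd (2/3) n = Dd (2/3) (n+1) := by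
  intro n
  rw [Dd_succ (2/3) (by norm_num) n]
  have h : ((3*n+3+0 : ℕ) : ℂ) * ((3*n+2+0 : ℕ) : ℂ) = 9*((n:ℂ)+1)*((n:ℂ)+((2/3:ℝ):ℂ)) := by
    push_cast; ring
  rw [h]

lemma hrelB : ∀ n : ℕ, ((3*n+3+1 : ℕ) : ℂ) * ((3*n+2+1 : ℕ) : ℂ) * Dd (4/3) n = Dd (4/3) (n+1) := by
  intro n
  rw [Dd_succ (4/3) (by norm_num) n]
  have h : ((3*n+3+1 : ℕ) : ℂ) * ((3*n+2+1 : ℕ) : ℂ) = 9*((n:ℂ)+1)*((n:ℂ)+((4/3:ℝ):ℂ)) := by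
    push_cast; ring
  rw [h]

lemma combo (F G F1 G1 H : ℂ → ℂ) (k1 k2 : ℂ)
    (hF : Differentiable ℂ F) (hFd : deriv F = F1) (hF1 : Differentiable ℂ F1)
    (hF2 : ∀ z, deriv F1 z = z * F z)
    (hG : Differentiable ℂ G) (hGd : deriv G = G1) (hG1 : Differentiable ℂ G1)
    (hG2 : ∀ z, deriv G1 z = z * G z)
    (hH : H = fun z => k1 * F z + k2 * G z) :
    Differentiable ℂ H ∧ Differentiable ℂ (deriv H) ∧
      ∀ z : ℂ, deriv (deriv H) z = z * H z := by
  have hd1 : ∀ z : ℂ, HasDerivAt H (k1 * F1 z + k2 * G1 z) z := by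
    intro z
    have h1 : HasDerivAt F (F1 z) z := by
      have := (hF z).hasDerivAt
      rwa [hFd] at this
    have h2 : HasDerivAt G (G1 z) z := by
      have := (hG z).hasDerivAt
      rwa [hGd] at this
    rw [hH]
    exact (h1.const_mul k1).add (h2.const_mul k2)
  have hderivH : deriv H = fun z => k1 * F1 z + k2 * G1 z := funext fun z => (hd1 z).deriv
  refine ⟨fun z => (hd1 z).differentiableAt, ?_, ?_⟩
  · rw [hderivH]
    exact fun z => ((hF1 z).const_mul k1).add ((hG1 z).const_mul k2)
  · intro z
    have h1 : HasDerivAt F1 (z * F z) z := by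
      have := (hF1 z).hasDerivAt
      rwa [hF2 z] at this
    have h2 : HasDerivAt G1 (z * G z) z := by
      have := (hG1 z).hasDerivAt
      rwa [hG2 z] at this
    have := ((h1.const_mul k1).add (h2.const_mul k2)).deriv
    rw [hderivH, show (fun z => k1 * F1 z + k2 * G1 z) = ((fun y => k1 * F1 y) + fun y => k2 * G1 y) from rfl, this, hH]
    ring


/-- `Ai` and `Bi` are entire and satisfy the Airy differential equation `y'' = z y`. -/
theorem airy_entire_and_ode :
    (Differentiable ℂ Ai ∧ Differentiable ℂ (deriv Ai) ∧
      ∀ z : ℂ, deriv (deriv Ai) z = z * Ai z) ∧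
    (Differentiable ℂ Bi ∧ Differentiable ℂ (deriv Bi) ∧
      ∀ z : ℂ, deriv (deriv Bi) z = z * Bi z) := by
  obtain ⟨hF, hFd, hF1, hF2⟩ := series_props (2/3) (by norm_num) 0 (by norm_num) hrelA
  obtain ⟨hG, hGd, hG1, hG2⟩ := series_props (4/3) (by norm_num) 1 (by norm_num) hrelB
  have hc1 : (((2:ℝ)/3 : ℝ) : ℂ) = 2/3 := by push_cast; ring
  have hc2 : (((4:ℝ)/3 : ℝ) : ℂ) = 4/3 := by push_cast; ring
  have hAi : Ai = fun z => (3:ℂ) ^ (-(2:ℂ)/3) * (∑' n : ℕ, z^(3*n+0)/Dd (2/3) n)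
      + (-((3:ℂ) ^ (-(4:ℂ)/3))) * (∑' n : ℕ, z^(3*n+1)/Dd (4/3) n) := by
    funext z
    simp only [Ai, Dd, hc1, hc2, Nat.add_zero]
    ring
  have hBi : Bi = fun z => (3:ℂ) ^ (-(1:ℂ)/6) * (∑' n : ℕ, z^(3*n+0)/Dd (2/3) n)
      + ((3:ℂ) ^ (-(5:ℂ)/6)) * (∑' n : ℕ, z^(3*n+1)/Dd (4/3) n) := by
    funext z
    simp only [Bi, Dd, hc1, hc2, Nat.add_zero]
  constructor
  · exact combo _ _ _ _ Ai ((3:ℂ) ^ (-(2:ℂ)/3)) (-((3:ℂ) ^ (-(4:ℂ)/3)))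
      hF hFd hF1 hF2 hG hGd hG1 hG2 hAi
  · exact combo _ _ _ _ Bi ((3:ℂ) ^ (-(1:ℂ)/6)) ((3:ℂ) ^ (-(5:ℂ)/6))
      hF hFd hF1 hF2 hG hGd hG1 hG2 hBi
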